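/- arXiv:0801.3218 — 2 statements merged into one kernel-verified Lean document; each statement's English description precedes it below -/
import Mathlib

section
/- Let Λ ⊆ ℂ be non-degenerate (i.e., the field K_Λ generated over ℚ by the difference set Λ − Λ and its complex conjugate is not contained in ℝ) and suppose that for every finite subset F of K_Λ there is a non-singular affine transformation Ψ of the plane with Ψ(F) ⊆ Λ. Then for m ≥ 3 there exists an affinely regular m-gon with all vertices in Λ if and only if the maximal real subfield k_m = Q(ζ_m + ζ_m^{-1}) of the m-th cyclotomic field is contained in k_Λ := K_Λ ∩ ℝ. -/
open Pointwise

/-- `ζ_m = e^{2πi/m}`, a primitive `m`-th root of unity in `ℂ`. -/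
noncomputable def zeta (m : ℕ) : ℂ := Complex.exp (2 * Real.pi * Complex.I / m)

/-- The maximal real subfield `k_m = ℚ(ζ_m + ζ_m⁻¹)` of the `m`-th cyclotomic field. -/
noncomputable def realCyclField (m : ℕ) : IntermediateField ℚ ℂ :=
  IntermediateField.adjoin ℚ {zeta m + (zeta m)⁻¹}

/-- `K_Λ = ℚ((Λ−Λ) ∪ conj(Λ−Λ))`, as a subfield of `ℂ`. -/
noncomputable def KL (Λ : Set ℂ) : IntermediateField ℚ ℂ :=
  IntermediateField.adjoin ℚ ((Λ - Λ) ∪ (starRingEnd ℂ) '' (Λ - Λ))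

/-- `k_Λ = K_Λ ∩ ℝ`, as a subset of `ℂ`. -/
noncomputable def kL (Λ : Set ℂ) : Set ℂ := {z : ℂ | z ∈ KL Λ ∧ z.im = 0}

/-- `Ψ : ℂ → ℂ` is a non-singular affine transformation of the plane. -/
def IsNSAffine (Ψ : ℂ → ℂ) : Prop :=
  ∃ (A : ℂ →ₗ[ℝ] ℂ) (t : ℂ), Function.Bijective A ∧ ∀ z : ℂ, Ψ z = A z + t

/-- There is an affinely regular `m`-gon with all vertices in `Λ`, i.e. a non-singular
affine image of the regular `m`-gon with vertices `1, ζ_m, …, ζ_m^{m-1}` lying in `Λ`. -/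
def HasAffRegularGon (m : ℕ) (Λ : Set ℂ) : Prop :=
  ∃ Ψ : ℂ → ℂ, IsNSAffine Ψ ∧ ∀ j : Fin m, Ψ ((zeta m) ^ (j : ℕ)) ∈ Λ

/-! ### Auxiliary lemmas -/

lemma zeta_eq (m : ℕ) : zeta m = Complex.exp (((2 * Real.pi / m : ℝ) : ℂ) * Complex.I) := by
  unfold zeta; norm_num; ring_nf

lemma zeta_im (m : ℕ) : (zeta m).im = Real.sin (2 * Real.pi / m) := by
  rw [zeta_eq, Complex.exp_ofReal_mul_I_im]

lemma zeta_im_pos {m : ℕ} (hm : 3 ≤ m) : 0 < (zeta m).im := by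
  rw [zeta_im]
  apply Real.sin_pos_of_pos_of_lt_pi
  · positivity
  · rw [div_lt_iff₀ (by positivity)]
    have h2 : (3:ℝ) ≤ m := by exact_mod_cast hm
    nlinarith [Real.pi_pos]

lemma zeta_ne_zero (m : ℕ) : zeta m ≠ 0 := Complex.exp_ne_zero _

lemma zeta_ne_one {m : ℕ} (hm : 3 ≤ m) : zeta m ≠ 1 := by
  intro h
  have := zeta_im_pos hm
  rw [h] at this
  simp at this

lemma zeta_conj (m : ℕ) : (starRingEnd ℂ) (zeta m) = (zeta m)⁻¹ := by
  rw [zeta_eq, ← Complex.exp_conj, ← Complex.exp_neg]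
  congr 1
  rw [map_mul, Complex.conj_ofReal, Complex.conj_I]
  ring

lemma zeta_add_inv (m : ℕ) : zeta m + (zeta m)⁻¹ = ((2 * (zeta m).re : ℝ) : ℂ) := by
  rw [← zeta_conj, Complex.add_conj]

lemma zeta_pow_m {m : ℕ} (hm : 3 ≤ m) : (zeta m) ^ m = 1 := by
  rw [zeta, ← Complex.exp_nat_mul, mul_div_cancel₀]
  · exact Complex.exp_two_pi_mul_I
  · exact_mod_cast (by omega : m ≠ 0)

lemma zeta_pow_mod {m : ℕ} (hm : 3 ≤ m) (n : ℕ) : (zeta m) ^ n = (zeta m) ^ (n % m) := by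
  conv_lhs => rw [← Nat.div_add_mod n m]
  rw [pow_add, pow_mul, zeta_pow_m hm, one_pow, one_mul]

/-- Key recurrence: `ζ^(n+2) = (ζ+ζ⁻¹)·ζ^(n+1) − ζ^n`. -/
lemma zeta_rec {m : ℕ} (n : ℕ) :
    (zeta m) ^ (n + 2) = (zeta m + (zeta m)⁻¹) * (zeta m) ^ (n + 1) - (zeta m) ^ n := by
  have h0 := zeta_ne_zero m
  field_simp
  ring

/-- The reals as an intermediate field of ℂ over ℚ. -/
noncomputable def Rf : IntermediateField ℚ ℂ :=
  Subfield.toIntermediateField Complex.ofRealHom.fieldRange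
    (fun q => ⟨(q : ℝ), by simp⟩)

lemma mem_Rf {z : ℂ} : z ∈ Rf ↔ z.im = 0 := by
  constructor
  · rintro ⟨r, rfl⟩; simp
  · intro h; exact ⟨z.re, Complex.ext rfl (by simp [h])⟩

/-- The real-linear map `x + iy ↦ x + y • v`. -/
noncomputable def phi (v : ℂ) : ℂ →ₗ[ℝ] ℂ :=
  Complex.reLm.smulRight (1:ℂ) + Complex.imLm.smulRight v

lemma phi_apply (v z : ℂ) : phi v z = (z.re : ℂ) + z.im • v := by
  simp [phi, Complex.real_smul]

lemma phi_injective {v : ℂ} (hv : v.im ≠ 0) : Function.Injective (phi v) := by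
  rw [injective_iff_map_eq_zero]
  intro z hz
  rw [phi_apply] at hz
  have him : z.im * v.im = 0 := by
    have := congrArg Complex.im hz
    simpa [Complex.smul_im] using this
  have h1 : z.im = 0 := by
    rcases mul_eq_zero.mp him with h | h
    · exact h
    · exact absurd h hv
  have hre : z.re = 0 := by
    have := congrArg Complex.re hz
    simpa [h1] using this
  exact Complex.ext hre h1

lemma phi_bijective {v : ℂ} (hv : v.im ≠ 0) : Function.Bijective (phi v) :=
  ⟨phi_injective hv, (LinearMap.injective_iff_surjective).mp (phi_injective hv)⟩

lemma sub_mem_KL {Λ : Set ℂ} {a b : ℂ} (ha : a ∈ Λ) (hb : b ∈ Λ) : a - b ∈ KL Λ :=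
  IntermediateField.subset_adjoin _ _ (Or.inl (Set.sub_mem_sub ha hb))

/-- Let `Λ ⊆ ℂ` be non-degenerate (`K_Λ ⊄ ℝ`) and satisfy property (Aff). Then for `m ≥ 3`
there is an affinely regular `m`-gon in `Λ` iff `k_m ⊆ k_Λ`. -/
theorem affRegularGon_iff (Λ : Set ℂ)
    (hnd : ∃ z ∈ KL Λ, z.im ≠ 0)
    (haff : ∀ F : Finset ℂ, (F : Set ℂ) ⊆ (KL Λ : Set ℂ) →
      ∃ Ψ : ℂ → ℂ, IsNSAffine Ψ ∧ Ψ '' (F : Set ℂ) ⊆ Λ)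
    (m : ℕ) (hm : 3 ≤ m) :
    HasAffRegularGon m Λ ↔ (realCyclField m : Set ℂ) ⊆ kL Λ := by
  set ζ := zeta m with hζdef
  have hζ0 : ζ ≠ 0 := zeta_ne_zero m
  have hζ1 : ζ ≠ 1 := zeta_ne_one hm
  set c : ℂ := ζ + ζ⁻¹ with hcdef
  have hcre : c = ((2 * ζ.re : ℝ) : ℂ) := zeta_add_inv m
  constructor
  · rintro ⟨Ψ, ⟨A, t, hA, hΨ⟩, hvert⟩
    -- all powers of ζ are sent into Λ
    have hmemΛ : ∀ n : ℕ, Ψ (ζ ^ n) ∈ Λ := by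
      intro n
      have : ζ ^ n = ζ ^ ((⟨n % m, Nat.mod_lt _ (by omega)⟩ : Fin m) : ℕ) :=
        zeta_pow_mod hm n
      rw [this]
      exact hvert _
    set u : ℕ → ℂ := fun n => Ψ (ζ ^ n) - Ψ (ζ ^ 0) with hudef
    have huKL : ∀ n, u n ∈ KL Λ := fun n => sub_mem_KL (hmemΛ n) (hmemΛ 0)
    have huA : ∀ n, u n = A (ζ ^ n - 1) := by
      intro n
      simp only [hudef, hΨ, pow_zero]
      rw [map_sub]
      ring
    -- the key identity
    have key : u 3 + u 1 - u 2 = c * (u 2 - u 1) := by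
      have hz : (ζ ^ 3 - 1) + (ζ ^ 1 - 1) - (ζ ^ 2 - 1) =
          ((2 * ζ.re : ℝ) : ℂ) * (ζ ^ 2 - ζ ^ 1) := by
        rw [← hcre, hcdef]
        field_simp
        ring
      have : A ((ζ ^ 3 - 1) + (ζ ^ 1 - 1) - (ζ ^ 2 - 1)) =
          A (((2 * ζ.re : ℝ) : ℂ) * (ζ ^ 2 - ζ ^ 1)) := by rw [hz]
      rw [map_sub, map_add] at this
      rw [← Complex.real_smul, map_smul, Complex.real_smul] at this
      rw [huA 3, huA 1, huA 2, this, ← hcre]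
      congr 1
      rw [← map_sub]
      congr 1
      ring
    have hden : u 2 - u 1 ≠ 0 := by
      rw [huA 2, huA 1, ← map_sub]
      intro h
      have := hA.1 (by rw [h, map_zero] : A (ζ ^ 2 - 1 - (ζ ^ 1 - 1)) = A 0)
      have h2 : ζ * (ζ - 1) = 0 := by
        have h3 : ζ ^ 2 - 1 - (ζ ^ 1 - 1) = ζ * (ζ - 1) := by ring
        rw [← h3, this]
      rcases mul_eq_zero.mp h2 with h | h
      · exact hζ0 h
      · exact hζ1 (by linear_combination h)
    have hcKL : c ∈ KL Λ := by
      have : c = (u 3 + u 1 - u 2) / (u 2 - u 1) := by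
        rw [key, mul_div_assoc, div_self hden, mul_one]
      rw [this]
      exact div_mem (sub_mem (add_mem (huKL 3) (huKL 1)) (huKL 2))
        (sub_mem (huKL 2) (huKL 1))
    have hcim : c.im = 0 := by rw [hcre]; simp
    have hle : realCyclField m ≤ KL Λ ⊓ Rf := by
      rw [realCyclField, IntermediateField.adjoin_le_iff, Set.singleton_subset_iff]
      exact ⟨hcKL, mem_Rf.mpr hcim⟩
    intro z hz
    have := hle hz
    exact ⟨this.1, mem_Rf.mp this.2⟩
  · intro hsub
    have hc : c ∈ kL Λ := hsub (IntermediateField.mem_adjoin_simple_self ℚ _)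
    have hcKL : c ∈ KL Λ := hc.1
    obtain ⟨w, hwKL, hwim⟩ := hnd
    have hs : ζ.im ≠ 0 := ne_of_gt (zeta_im_pos hm)
    set v : ℂ := (ζ.im)⁻¹ • w with hvdef
    have hv : v.im ≠ 0 := by
      rw [hvdef, Complex.smul_im]
      exact mul_ne_zero (inv_ne_zero hs) hwim
    set Φ := phi v with hΦdef
    -- ζ.re as a complex number is in K_Λ
    have hreKL : ((ζ.re : ℝ) : ℂ) ∈ KL Λ := by
      have h2 : ((ζ.re : ℝ) : ℂ) = c / 2 := by
        rw [hcre]; push_cast; ring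
      rw [h2]
      exact div_mem hcKL (by exact_mod_cast natCast_mem (KL Λ) 2)
    -- Φ(ζ^n) ∈ K_Λ for all n
    have hΦ0 : Φ (ζ ^ 0) = 1 := by
      rw [pow_zero, hΦdef, phi_apply]; simp
    have hΦ1 : Φ (ζ ^ 1) = ((ζ.re : ℝ) : ℂ) + w := by
      rw [pow_one, hΦdef, phi_apply, hvdef, smul_smul, mul_inv_cancel₀ hs, one_smul]
    have hΦmem : ∀ n : ℕ, Φ (ζ ^ n) ∈ KL Λ ∧ Φ (ζ ^ (n + 1)) ∈ KL Λ := by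
      intro n
      induction n with
      | zero =>
        constructor
        · rw [hΦ0]; exact one_mem _
        · rw [zero_add, hΦ1]; exact add_mem hreKL hwKL
      | succ k ih =>
        refine ⟨ih.2, ?_⟩
        have hrec : Φ (ζ ^ (k + 1 + 1)) = c * Φ (ζ ^ (k + 1)) - Φ (ζ ^ k) := by
          have hz : ζ ^ (k + 2) = ((2 * ζ.re : ℝ) : ℂ) * ζ ^ (k + 1) - ζ ^ k := by
            rw [← hcre]; exact zeta_rec k
          have : Φ (ζ ^ (k + 2)) =
              Φ (((2 * ζ.re : ℝ) : ℂ) * ζ ^ (k + 1)) - Φ (ζ ^ k) := by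
            rw [← map_sub, ← hz]
          rw [show k + 1 + 1 = k + 2 from rfl, this,
            ← Complex.real_smul, map_smul, Complex.real_smul, ← hcre]
        rw [hrec]
        exact sub_mem (mul_mem hcKL ih.2) ih.1
    -- apply (Aff) to the finite set of these vertices
    set F : Finset ℂ := (Finset.range m).image (fun n => Φ (ζ ^ n)) with hFdef
    have hF : (F : Set ℂ) ⊆ (KL Λ : Set ℂ) := by
      intro x hx
      rw [hFdef, Finset.coe_image] at hx
      obtain ⟨n, _, rfl⟩ := hx
      exact (hΦmem n).1
    obtain ⟨Ψ, ⟨A, t, hA, hΨ⟩, him⟩ := haff F hF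
    refine ⟨Ψ ∘ Φ, ⟨A ∘ₗ Φ, t, ?_, fun z => by simp [hΨ]⟩, ?_⟩
    · rw [LinearMap.coe_comp]
      exact hA.comp (phi_bijective hv)
    · intro j
      apply him
      refine ⟨Φ (ζ ^ (j : ℕ)), ?_, rfl⟩
      rw [hFdef, Finset.coe_image]
      exact ⟨(j : ℕ), by simp [j.isLt], rfl⟩
end

section
/- Let Λ ⊆ ℂ be non-degenerate with properties (Alg) and (Aff): [K_Λ : ℚ] < ∞, and for every finite F ⊆ K_Λ some non-singular affine image of F lies in Λ. Then the set of m ≥ 3 for which Λ contains an affinely regular m-gon is finite. -/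
open Pointwise

open IntermediateField

lemma totient_sq_bound (n : ℕ) : n ≤ 2 * n.totient ^ 2 ∧ (Odd n → n ≤ n.totient ^ 2) := by
  induction n using Nat.recOnPosPrimePosCoprime with
  | prime_pow p k hp hk =>
    have hp' : p.Prime := hp
    obtain ⟨j, rfl⟩ : ∃ j, k = j + 1 := ⟨k - 1, by omega⟩
    have htot : (p ^ (j + 1)).totient = p ^ j * (p - 1) := by
      simpa using Nat.totient_prime_pow hp' hk
    rw [htot]
    have hp2 : 2 ≤ p := hp'.two_le
    have hodd : 3 ≤ p → p ^ (j + 1) ≤ (p ^ j * (p - 1)) ^ 2 := by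
      intro h3
      have h1 : p ≤ (p - 1) ^ 2 := by
        obtain ⟨q, rfl⟩ : ∃ q, p = q + 2 := ⟨p - 2, by omega⟩
        have hq : q + 2 - 1 = q + 1 := by omega
        rw [hq]; nlinarith
      calc p ^ (j + 1) = p ^ j * p := by ring
        _ ≤ p ^ j * (p - 1) ^ 2 := Nat.mul_le_mul_left _ h1
        _ ≤ p ^ j * p ^ j * (p - 1) ^ 2 :=
              Nat.mul_le_mul_right _ (Nat.le_mul_of_pos_right _ (Nat.pow_pos (by omega)))
        _ = (p ^ j * (p - 1)) ^ 2 := by ring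
    constructor
    · rcases eq_or_lt_of_le hp2 with h2 | h3
      · subst h2
        calc (2:ℕ) ^ (j + 1) ≤ 2 ^ (2 * j + 1) := Nat.pow_le_pow_right (by omega) (by omega)
          _ = 2 * (2 ^ j * (2 - 1)) ^ 2 := by norm_num; ring
      · have := hodd (by omega)
        omega
    · intro ho
      have hpodd : p ≠ 2 := by
        rintro rfl
        have : Even ((2:ℕ) ^ (j + 1)) := (Nat.even_pow).mpr ⟨even_two, by omega⟩
        exact (Nat.not_even_iff_odd.mpr ho) this
      exact hodd (by omega)
  | zero => simp
  | one => simp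
  | coprime a b ha hb hab Pa Pb =>
    have htot : (a * b).totient = a.totient * b.totient := Nat.totient_mul hab
    rw [htot]
    constructor
    · have hor : Odd a ∨ Odd b := by
        by_contra hc
        push_neg at hc
        have h2a : 2 ∣ a := (Nat.not_odd_iff_even.mp hc.1).two_dvd
        have h2b : 2 ∣ b := (Nat.not_odd_iff_even.mp hc.2).two_dvd
        have := Nat.dvd_gcd h2a h2b
        rw [Nat.Coprime] at hab
        omega
      rcases hor with hA | hB
      · calc a * b ≤ a.totient ^ 2 * (2 * b.totient ^ 2) :=
              Nat.mul_le_mul (Pa.2 hA) Pb.1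
          _ = 2 * (a.totient * b.totient) ^ 2 := by ring
      · calc a * b ≤ (2 * a.totient ^ 2) * b.totient ^ 2 :=
              Nat.mul_le_mul Pa.1 (Pb.2 hB)
          _ = 2 * (a.totient * b.totient) ^ 2 := by ring
    · intro ho
      rw [Nat.odd_mul] at ho
      calc a * b ≤ a.totient ^ 2 * b.totient ^ 2 := Nat.mul_le_mul (Pa.2 ho.1) (Pb.2 ho.2)
        _ = (a.totient * b.totient) ^ 2 := by ring


set_option maxHeartbeats 1000000 in
set_option synthInstance.maxHeartbeats 200000 in
lemma totient_le_of_gon (Λ : Set ℂ) (halg : FiniteDimensional ℚ (KL Λ))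
    (m : ℕ) (hm3 : 3 ≤ m) (hgon : HasAffRegularGon m Λ) :
    m.totient ≤ Module.finrank ℚ (KL Λ) * 2 := by
  obtain ⟨Ψ, ⟨A, t, hAbij, hAt⟩, hmem⟩ := hgon
  set K' := KL Λ with hK'
  set ζ := zeta m with hζ
  have hm0 : (m : ℕ) ≠ 0 := by omega
  have hprim : IsPrimitiveRoot ζ m := Complex.isPrimitiveRoot_exp m hm0
  -- all powers of ζ map into Λ
  have hv : ∀ k : ℕ, Ψ (ζ ^ k) ∈ Λ := by
    intro k
    have h := hmem ⟨k % m, Nat.mod_lt _ (by omega)⟩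
    have hpow : ζ ^ (k % m) = ζ ^ k := by
      conv_rhs => rw [← Nat.mod_add_div k m]
      rw [pow_add, pow_mul, hprim.pow_eq_one, one_pow, mul_one]
    simpa [hpow] using h
  -- differences lie in K'
  have hsub : Λ - Λ ⊆ (K' : Set ℂ) :=
    Set.Subset.trans Set.subset_union_left (IntermediateField.subset_adjoin ℚ _)
  have hw : ∀ j : ℕ, A (ζ ^ (j + 1)) - A (ζ ^ j) ∈ K' := by
    intro j
    have : Ψ (ζ ^ (j + 1)) - Ψ (ζ ^ j) ∈ Λ - Λ := Set.sub_mem_sub (hv (j + 1)) (hv j)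
    have h2 := hsub this
    simpa [hAt] using h2
  -- the trigonometric quantity
  set c : ℝ := 2 * Real.cos (2 * Real.pi / m) with hc
  have hθ : ζ = Complex.exp ((↑(2 * Real.pi / m) : ℂ) * Complex.I) := by
    rw [hζ]; unfold zeta
    congr 1
    push_cast
    field_simp
  set θ : ℝ := 2 * Real.pi / m with hθdef
  have hζθ : ζ = Complex.exp ((θ : ℂ) * Complex.I) := hθ
  have hcE : (c : ℂ) = Complex.exp ((θ : ℂ) * Complex.I) + Complex.exp (-(θ : ℂ) * Complex.I) := by
    rw [hc]
    push_cast [Complex.ofReal_cos]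
    rw [Complex.cos]
    ring
  have hEE : Complex.exp (-(θ : ℂ) * Complex.I) * Complex.exp ((θ : ℂ) * Complex.I) = 1 := by
    rw [← Complex.exp_add, show -(θ:ℂ) * Complex.I + (θ:ℂ) * Complex.I = 0 by ring,
      Complex.exp_zero]
  have hkey : ζ ^ 2 + 1 = (c : ℂ) * ζ := by
    rw [hζθ, hcE]
    linear_combination -hEE
  have hζ1 : ζ ≠ 1 := by
    have := hprim.pow_ne_one_of_pos_of_lt (l := 1) one_ne_zero (by omega)
    simpa using this
  have hζ0 : ζ ≠ 0 := by rw [hθ]; exact Complex.exp_ne_zero _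
  -- w1 ≠ 0
  have hdiff : ζ ^ 2 - ζ ≠ 0 := by
    intro h
    apply hζ1
    have : ζ * (ζ - 1) = 0 := by linear_combination h
    rcases mul_eq_zero.mp this with h | h
    · exact absurd h hζ0
    · exact sub_eq_zero.mp h
  have hw1ne : A (ζ ^ 2) - A (ζ ^ 1) ≠ 0 := by
    intro h
    apply hdiff
    refine hAbij.1 ?_
    rw [pow_one] at h
    rw [map_sub, map_zero]
    exact h
  -- the key linear identity
  have hw2 : A (ζ ^ 3) - A (ζ ^ 2) + (A (ζ ^ 1) - A (ζ ^ 0)) = (c : ℂ) * (A (ζ ^ 2) - A (ζ ^ 1)) := by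
    have harg : ζ ^ 3 - ζ ^ 2 + (ζ ^ 1 - ζ ^ 0) = c • (ζ ^ 2 - ζ ^ 1) := by
      rw [Complex.real_smul]
      simp only [pow_zero, pow_one]
      linear_combination (ζ - 1) * hkey
    calc A (ζ ^ 3) - A (ζ ^ 2) + (A (ζ ^ 1) - A (ζ ^ 0))
        = A (ζ ^ 3 - ζ ^ 2 + (ζ ^ 1 - ζ ^ 0)) := by rw [map_add, map_sub, map_sub]
      _ = A (c • (ζ ^ 2 - ζ ^ 1)) := by rw [harg]
      _ = c • A (ζ ^ 2 - ζ ^ 1) := map_smul A c _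
      _ = (c : ℂ) * (A (ζ ^ 2) - A (ζ ^ 1)) := by rw [map_sub, Complex.real_smul]
  have hcK : (c : ℂ) ∈ K' := by
    have heq : (c : ℂ) = (A (ζ ^ 3) - A (ζ ^ 2) + (A (ζ ^ 1) - A (ζ ^ 0)))
        * (A (ζ ^ 2) - A (ζ ^ 1))⁻¹ := by
      rw [hw2, mul_assoc, mul_inv_cancel₀ hw1ne, mul_one]
    rw [heq]
    refine mul_mem (add_mem ?_ ?_) (inv_mem ?_)
    · simpa using hw 2
    · simpa using hw 0
    · simpa using hw 1
  -- field theory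
  set cK : K' := ⟨(c : ℂ), hcK⟩ with hcKdef
  set p : Polynomial K' := Polynomial.X ^ 2 + (Polynomial.C (-cK) * Polynomial.X + Polynomial.C 1)
    with hpdef
  have hmonic : p.Monic := by
    apply Polynomial.monic_X_pow_add
    exact lt_of_le_of_lt (Polynomial.degree_linear_le) (by norm_num)
  have hpev : Polynomial.aeval ζ p = 0 := by
    have hcmap : algebraMap K' ℂ cK = (c : ℂ) := rfl
    simp only [hpdef, map_add, map_pow, map_mul, map_one, map_neg, Polynomial.aeval_X,
      Polynomial.aeval_C, hcmap]
    linear_combination hkey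
  have hint : IsIntegral K' ζ := ⟨p, hmonic, hpev⟩
  have hmdeg : (minpoly K' ζ).natDegree ≤ 2 := by
    have hdle := minpoly.degree_le_of_ne_zero K' ζ hmonic.ne_zero hpev
    have hpd : p.degree ≤ 2 := by
      rw [hpdef]
      compute_degree
    exact Polynomial.natDegree_le_iff_degree_le.mpr (le_trans hdle hpd)
  haveI : FiniteDimensional K' K'⟮ζ⟯ := IntermediateField.adjoin.finiteDimensional hint
  have hfr2 : Module.finrank K' K'⟮ζ⟯ ≤ 2 := by
    rw [IntermediateField.adjoin.finrank hint]; exact hmdeg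
  haveI : FiniteDimensional ℚ K'⟮ζ⟯ := FiniteDimensional.trans ℚ K' K'⟮ζ⟯
  set x : K'⟮ζ⟯ := ⟨ζ, IntermediateField.mem_adjoin_simple_self K' ζ⟩ with hxdef
  have hxmin : minpoly ℚ ζ = minpoly ℚ x := by
    have h := minpoly.algebraMap_eq (B := K'⟮ζ⟯) (B' := ℂ) (A := ℚ)
      (algebraMap (K'⟮ζ⟯) ℂ).injective x
    rw [← h]
    rfl
  have htot : m.totient = (minpoly ℚ ζ).natDegree := by
    rw [← Polynomial.cyclotomic_eq_minpoly_rat hprim (by omega), Polynomial.natDegree_cyclotomic]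
  calc m.totient = (minpoly ℚ x).natDegree := by rw [htot, hxmin]
    _ ≤ Module.finrank ℚ K'⟮ζ⟯ := minpoly.natDegree_le x
    _ = Module.finrank ℚ K' * Module.finrank K' K'⟮ζ⟯ :=
        (Module.finrank_mul_finrank ℚ K' K'⟮ζ⟯).symm
    _ ≤ Module.finrank ℚ K' * 2 := Nat.mul_le_mul_left _ hfr2


/-- Let `Λ ⊆ ℂ` be non-degenerate with properties (Alg) (`[K_Λ : ℚ] < ∞`) and (Aff).
Then `Λ` contains affinely regular `m`-gons for only finitely many `m ≥ 3`. -/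
theorem affRegularGon_finite (Λ : Set ℂ)
    (hnd : ∃ z ∈ KL Λ, z.im ≠ 0)
    (halg : FiniteDimensional ℚ (KL Λ))
    (haff : ∀ F : Finset ℂ, (F : Set ℂ) ⊆ (KL Λ : Set ℂ) →
      ∃ Ψ : ℂ → ℂ, IsNSAffine Ψ ∧ Ψ '' (F : Set ℂ) ⊆ Λ) :
    {m : ℕ | 3 ≤ m ∧ HasAffRegularGon m Λ}.Finite := by
  apply Set.Finite.subset (Set.finite_le_nat (2 * (Module.finrank ℚ (KL Λ) * 2) ^ 2))
  rintro m ⟨hm3, hgon⟩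
  have h1 := totient_le_of_gon Λ halg m hm3 hgon
  have h2 := (totient_sq_bound m).1
  have h3 : m.totient ^ 2 ≤ (Module.finrank ℚ (KL Λ) * 2) ^ 2 := Nat.pow_le_pow_left h1 2
  simp only [Set.mem_setOf_eq]
  omega
end
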